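/- Suppose E contains no run of 3 consecutive edges and let M be a 2-locally-optimal consecutive matching in E. Then for every consecutive matching O in E one has 5·|M| ≥ 2·|O| (i.e., M is a 2.5-approximation of a maximum consecutive matching in E). -/
import Mathlib


/-- Two edges `(i,j)` and `(i',j')` of the bipartite graph overlap if
`|i - i'| ≤ 1` or `|j - j'| ≤ 1`. -/
def Overlap {n : ℕ} (e e' : Fin n × Fin n) : Prop :=
  ((e.1.val : ℤ) - e'.1.val).natAbs ≤ 1 ∨ ((e.2.val : ℤ) - e'.2.val).natAbs ≤ 1

instance {n : ℕ} (e e' : Fin n × Fin n) : Decidable (Overlap e e') := by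
  unfold Overlap; infer_instance

/-- `M` is a consecutive matching in `E`. -/
def ConsecMatching {n : ℕ} (E M : Finset (Fin n × Fin n)) : Prop :=
  M ⊆ E ∧
  (∀ e ∈ M, ∀ e' ∈ M, e ≠ e' → e.1 ≠ e'.1 ∧ e.2 ≠ e'.2) ∧
  (∀ e ∈ M, ∀ e' ∈ M, e'.1.val = e.1.val + 1 → e'.2.val = e.2.val + 1) ∧
  (∀ e ∈ M, ∀ e' ∈ M, e'.2.val = e.2.val + 1 → e'.1.val = e.1.val + 1)

/-- `s` is the run of `ℓ` consecutive edges at `(p, q)`,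
i.e. `s = {(p+r, q+r) : 0 ≤ r < ℓ}`. -/
def IsRunAt {n : ℕ} (s : Finset (Fin n × Fin n)) (p q ℓ : ℕ) : Prop :=
  p + ℓ ≤ n ∧ q + ℓ ≤ n ∧
  ∀ e : Fin n × Fin n, e ∈ s ↔ ∃ r < ℓ, e.1.val = p + r ∧ e.2.val = q + r

/-- `s` is a run of `ℓ` consecutive edges. -/
def IsRun {n : ℕ} (s : Finset (Fin n × Fin n)) (ℓ : ℕ) : Prop :=
  ∃ p q, IsRunAt s p q ℓ

/-- `E` contains no run of `k` consecutive edges. -/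
def NoRun {n : ℕ} (E : Finset (Fin n × Fin n)) (k : ℕ) : Prop :=
  ¬ ∃ s : Finset (Fin n × Fin n), IsRun s k ∧ s ⊆ E

/-- `s` is a streak of `M`: a run of (at least one) consecutive edges contained in `M`,
maximal under inclusion among runs contained in `M`. -/
def IsStreak {n : ℕ} (M s : Finset (Fin n × Fin n)) : Prop :=
  (∃ ℓ, 1 ≤ ℓ ∧ IsRun s ℓ) ∧ s ⊆ M ∧
  ∀ s' ℓ', IsRun s' ℓ' → s' ⊆ M → s ⊆ s' → s' = s

/-- `s 0, …, s (m-1)` is a greedy sequence in `E` with threshold `k`: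
each `s i` is a run of at least `k` consecutive edges, all of whose edges
overlap no edge of the previously chosen runs, and no run of consecutive
edges all still available at step `i` is longer than `s i`. -/
def GreedySeq {n : ℕ} (E : Finset (Fin n × Fin n)) (k m : ℕ)
    (s : ℕ → Finset (Fin n × Fin n)) : Prop :=
  ∀ i < m,
    s i ⊆ E.filter (fun e => ∀ j < i, ∀ e' ∈ s j, ¬ Overlap e e') ∧
    (∃ ℓ, k ≤ ℓ ∧ IsRun (s i) ℓ) ∧
    (∀ r ℓ, IsRun r ℓ →
      r ⊆ E.filter (fun e => ∀ j < i, ∀ e' ∈ s j, ¬ Overlap e e') →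
      ℓ ≤ (s i).card)

/-- `M` is a `t`-locally-optimal consecutive matching in `E`. -/
def LocallyOptimal {n : ℕ} (E M : Finset (Fin n × Fin n)) (t : ℕ) : Prop :=
  ConsecMatching E M ∧
  ¬ ∃ Erem Eadd : Finset (Fin n × Fin n), Erem ⊆ M ∧ Eadd ⊆ E \ M ∧
      Erem.card < Eadd.card ∧ Eadd.card ≤ t ∧
      ConsecMatching E ((M \ Erem) ∪ Eadd)

section LocalSearchAux

variable {n : ℕ}

lemma overlap_self' (e : Fin n × Fin n) : Overlap e e := by
  unfold Overlap; left; omega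

lemma overlap_symm' {e e' : Fin n × Fin n} (h : Overlap e e') : Overlap e' e := by
  unfold Overlap at h ⊢; omega

/-- The pairwise condition making a set a consecutive matching. -/
def PairOK (e e' : Fin n × Fin n) : Prop :=
  (e ≠ e' → e.1 ≠ e'.1 ∧ e.2 ≠ e'.2) ∧
  (e'.1.val = e.1.val + 1 → e'.2.val = e.2.val + 1) ∧
  (e'.2.val = e.2.val + 1 → e'.1.val = e.1.val + 1)

lemma pairOK_of_cm {E X : Finset (Fin n × Fin n)} (h : ConsecMatching E X)
    {e e' : Fin n × Fin n} (he : e ∈ X) (he' : e' ∈ X) : PairOK e e' :=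
  ⟨fun hne => h.2.1 e he e' he' hne, h.2.2.1 e he e' he', h.2.2.2 e he e' he'⟩

lemma pairOK_of_not_overlap {e e' : Fin n × Fin n} (h : ¬ Overlap e e') : PairOK e e' := by
  unfold Overlap at h
  push_neg at h
  obtain ⟨h1, h2⟩ := h
  refine ⟨fun _ => ⟨fun hh => ?_, fun hh => ?_⟩, fun hh => ?_, fun hh => ?_⟩
  · have := congrArg Fin.val hh; omega
  · have := congrArg Fin.val hh; omega
  · omega
  · omega

lemma cm_build {E X : Finset (Fin n × Fin n)} (hsub : X ⊆ E)
    (h : ∀ e ∈ X, ∀ e' ∈ X, PairOK e e') : ConsecMatching E X :=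
  ⟨hsub, fun e he e' he' hne => (h e he e' he').1 hne,
   fun e he e' he' => (h e he e' he').2.1, fun e he e' he' => (h e he e' he').2.2⟩


lemma window3 {x y z : ℕ} {i : ℕ} (hx : ((x:ℤ) - i).natAbs ≤ 1)
    (hy : ((y:ℤ) - i).natAbs ≤ 1) (hz : ((z:ℤ) - i).natAbs ≤ 1)
    (dxy : x ≠ y) (dxz : x ≠ z) (dyz : y ≠ z) :
    (y = x + 1 ∧ z = y + 1) ∨ (z = x + 1 ∧ y = z + 1) ∨
    (x = y + 1 ∧ z = x + 1) ∨ (z = y + 1 ∧ x = z + 1) ∨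
    (x = z + 1 ∧ y = x + 1) ∨ (y = z + 1 ∧ x = y + 1) := by omega

lemma no_chain {E O : Finset (Fin n × Fin n)} (hE : NoRun E 3) (hO : ConsecMatching E O)
    {a b c : Fin n × Fin n} (ha : a ∈ O) (hb : b ∈ O) (hc : c ∈ O)
    (hab : b.1.val = a.1.val + 1) (hbc : c.1.val = b.1.val + 1) : False := by
  have h2ab : b.2.val = a.2.val + 1 := hO.2.2.1 a ha b hb hab
  have h2bc : c.2.val = b.2.val + 1 := hO.2.2.1 b hb c hc hbc
  apply hE
  refine ⟨{a, b, c}, ⟨a.1.val, a.2.val, ?_, ?_, ?_⟩, ?_⟩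
  · have := c.1.isLt; omega
  · have := c.2.isLt; omega
  · intro e
    simp only [Finset.mem_insert, Finset.mem_singleton]
    constructor
    · rintro (rfl | rfl | rfl)
      · exact ⟨0, by omega, by omega, by omega⟩
      · exact ⟨1, by omega, by omega, by omega⟩
      · exact ⟨2, by omega, by omega, by omega⟩
    · rintro ⟨r, hr, h1, h2⟩
      interval_cases r
      · exact Or.inl (Prod.ext_iff.mpr ⟨Fin.ext (by omega), Fin.ext (by omega)⟩)
      · exact Or.inr (Or.inl (Prod.ext_iff.mpr ⟨Fin.ext (by omega), Fin.ext (by omega)⟩))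
      · exact Or.inr (Or.inr (Prod.ext_iff.mpr ⟨Fin.ext (by omega), Fin.ext (by omega)⟩))
  · intro x hx
    simp only [Finset.mem_insert, Finset.mem_singleton] at hx
    rcases hx with rfl | rfl | rfl
    exacts [hO.1 ha, hO.1 hb, hO.1 hc]

lemma near_first_le_two {E O : Finset (Fin n × Fin n)} (hE : NoRun E 3)
    (hO : ConsecMatching E O) (i : ℕ) :
    (O.filter (fun o => ((o.1.val : ℤ) - i).natAbs ≤ 1)).card ≤ 2 := by
  by_contra hcard
  push_neg at hcard
  obtain ⟨a, b, c, ha, hb, hc, hab, hac, hbc⟩ := Finset.two_lt_card_iff.mp hcard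
  rw [Finset.mem_filter] at ha hb hc
  have d1 : a.1.val ≠ b.1.val := fun h => (hO.2.1 a ha.1 b hb.1 hab).1 (Fin.ext h)
  have d2 : a.1.val ≠ c.1.val := fun h => (hO.2.1 a ha.1 c hc.1 hac).1 (Fin.ext h)
  have d3 : b.1.val ≠ c.1.val := fun h => (hO.2.1 b hb.1 c hc.1 hbc).1 (Fin.ext h)
  have ha2 := ha.2; have hb2 := hb.2; have hc2 := hc.2
  have key := window3 ha2 hb2 hc2 d1 d2 d3
  rcases key with ⟨k1, k2⟩ | ⟨k1, k2⟩ | ⟨k1, k2⟩ | ⟨k1, k2⟩ | ⟨k1, k2⟩ | ⟨k1, k2⟩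
  · exact no_chain hE hO ha.1 hb.1 hc.1 k1 k2
  · exact no_chain hE hO ha.1 hc.1 hb.1 k1 k2
  · exact no_chain hE hO hb.1 ha.1 hc.1 k1 k2
  · exact no_chain hE hO hb.1 hc.1 ha.1 k1 k2
  · exact no_chain hE hO hc.1 ha.1 hb.1 k1 k2
  · exact no_chain hE hO hc.1 hb.1 ha.1 k1 k2

lemma near_second_le_two {E O : Finset (Fin n × Fin n)} (hE : NoRun E 3)
    (hO : ConsecMatching E O) (i : ℕ) :
    (O.filter (fun o => ((o.2.val : ℤ) - i).natAbs ≤ 1)).card ≤ 2 := by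
  by_contra hcard
  push_neg at hcard
  obtain ⟨a, b, c, ha, hb, hc, hab, hac, hbc⟩ := Finset.two_lt_card_iff.mp hcard
  rw [Finset.mem_filter] at ha hb hc
  have d1 : a.2.val ≠ b.2.val := fun h => (hO.2.1 a ha.1 b hb.1 hab).2 (Fin.ext h)
  have d2 : a.2.val ≠ c.2.val := fun h => (hO.2.1 a ha.1 c hc.1 hac).2 (Fin.ext h)
  have d3 : b.2.val ≠ c.2.val := fun h => (hO.2.1 b hb.1 c hc.1 hbc).2 (Fin.ext h)
  have ha2 := ha.2; have hb2 := hb.2; have hc2 := hc.2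
  have lift : ∀ u ∈ O, ∀ v ∈ O, v.2.val = u.2.val + 1 → v.1.val = u.1.val + 1 :=
    fun u hu v hv h => hO.2.2.2 u hu v hv h
  have key := window3 ha2 hb2 hc2 d1 d2 d3
  rcases key with ⟨k1, k2⟩ | ⟨k1, k2⟩ | ⟨k1, k2⟩ | ⟨k1, k2⟩ | ⟨k1, k2⟩ | ⟨k1, k2⟩
  · exact no_chain hE hO ha.1 hb.1 hc.1 (lift a ha.1 b hb.1 k1) (lift b hb.1 c hc.1 k2)
  · exact no_chain hE hO ha.1 hc.1 hb.1 (lift a ha.1 c hc.1 k1) (lift c hc.1 b hb.1 k2)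
  · exact no_chain hE hO hb.1 ha.1 hc.1 (lift b hb.1 a ha.1 k1) (lift a ha.1 c hc.1 k2)
  · exact no_chain hE hO hb.1 hc.1 ha.1 (lift b hb.1 c hc.1 k1) (lift c hc.1 a ha.1 k2)
  · exact no_chain hE hO hc.1 ha.1 hb.1 (lift c hc.1 a ha.1 k1) (lift a ha.1 b hb.1 k2)
  · exact no_chain hE hO hc.1 hb.1 ha.1 (lift c hc.1 b hb.1 k1) (lift b hb.1 a ha.1 k2)

lemma overlapping_le_four {E O : Finset (Fin n × Fin n)} (hE : NoRun E 3)
    (hO : ConsecMatching E O) (m : Fin n × Fin n) :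
    (O.filter (fun o => Overlap o m)).card ≤ 4 := by
  have hsub : O.filter (fun o => Overlap o m) ⊆
      O.filter (fun o => ((o.1.val : ℤ) - m.1.val).natAbs ≤ 1) ∪
      O.filter (fun o => ((o.2.val : ℤ) - m.2.val).natAbs ≤ 1) := by
    intro o ho
    rw [Finset.mem_filter] at ho
    have ho2 := ho.2
    unfold Overlap at ho2
    rcases ho2 with h | h
    · exact Finset.mem_union_left _ (Finset.mem_filter.mpr ⟨ho.1, h⟩)
    · exact Finset.mem_union_right _ (Finset.mem_filter.mpr ⟨ho.1, h⟩)
  calc (O.filter (fun o => Overlap o m)).card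
      ≤ _ := Finset.card_le_card hsub
    _ ≤ (O.filter (fun o => ((o.1.val : ℤ) - m.1.val).natAbs ≤ 1)).card +
        (O.filter (fun o => ((o.2.val : ℤ) - m.2.val).natAbs ≤ 1)).card :=
        Finset.card_union_le _ _
    _ ≤ 4 := by
        have := near_first_le_two hE hO m.1.val
        have := near_second_le_two hE hO m.2.val
        omega

end LocalSearchAux
section LocalSearchMain

variable {n : ℕ}

lemma exists_overlap {E M O : Finset (Fin n × Fin n)} (hM : LocallyOptimal E M 2)
    (hO : ConsecMatching E O) {o : Fin n × Fin n} (ho : o ∈ O) :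
    (M.filter (fun x => Overlap o x)).Nonempty := by
  by_cases hoM : o ∈ M
  · exact ⟨o, Finset.mem_filter.mpr ⟨hoM, overlap_self' o⟩⟩
  by_contra hne
  rw [Finset.not_nonempty_iff_eq_empty, Finset.filter_eq_empty_iff] at hne
  apply hM.2
  refine ⟨∅, {o}, Finset.empty_subset _, ?_, by simp, by simp, ?_⟩
  · rw [Finset.singleton_subset_iff, Finset.mem_sdiff]
    exact ⟨hO.1 ho, hoM⟩
  · rw [Finset.sdiff_empty]
    apply cm_build
    · intro x hx
      rcases Finset.mem_union.mp hx with h | h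
      · exact hM.1.1 h
      · rw [Finset.mem_singleton] at h; subst h; exact hO.1 ho
    · intro e he e' he'
      rcases Finset.mem_union.mp he with h1 | h1 <;>
        rcases Finset.mem_union.mp he' with h2 | h2
      · exact pairOK_of_cm hM.1 h1 h2
      · rw [Finset.mem_singleton] at h2; subst h2
        exact pairOK_of_not_overlap (fun hov => hne h1 (overlap_symm' hov))
      · rw [Finset.mem_singleton] at h1; subst h1
        exact pairOK_of_not_overlap (hne h2)
      · rw [Finset.mem_singleton] at h1 h2; subst h1; subst h2
        exact pairOK_of_cm hO ho ho

lemma private_le_one {E M O : Finset (Fin n × Fin n)} (hM : LocallyOptimal E M 2)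
    (hO : ConsecMatching E O) {m : Fin n × Fin n} (hm : m ∈ M) :
    (O.filter (fun o => M.filter (fun x => Overlap o x) = {m})).card ≤ 1 := by
  by_contra h
  push_neg at h
  obtain ⟨a, ha, b, hb, hab⟩ := Finset.one_lt_card.mp h
  rw [Finset.mem_filter] at ha hb
  obtain ⟨haO, haN⟩ := ha
  obtain ⟨hbO, hbN⟩ := hb
  have hOnly : ∀ y : Fin n × Fin n, M.filter (fun x => Overlap y x) = {m} →
      ∀ x ∈ M, x ≠ m → ¬ Overlap y x := by
    intro y hy x hx hxm hov
    have hmem : x ∈ M.filter (fun x => Overlap y x) := Finset.mem_filter.mpr ⟨hx, hov⟩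
    rw [hy, Finset.mem_singleton] at hmem
    exact hxm hmem
  have hMem : ∀ y ∈ M, M.filter (fun x => Overlap y x) = {m} → y = m := by
    intro y hy hyN
    have hmem : y ∈ M.filter (fun x => Overlap y x) :=
      Finset.mem_filter.mpr ⟨hy, overlap_self' y⟩
    rwa [hyN, Finset.mem_singleton] at hmem
  have single_imp : ∀ u ∈ O, u ∉ M → M.filter (fun x => Overlap u x) = {m} →
      m ∈ O → False := by
    intro u huO huM huN hmO
    apply hM.2
    refine ⟨∅, {u}, Finset.empty_subset _, ?_, by simp, by simp, ?_⟩
    · rw [Finset.singleton_subset_iff, Finset.mem_sdiff]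
      exact ⟨hO.1 huO, huM⟩
    · rw [Finset.sdiff_empty]
      apply cm_build
      · intro x hx
        rcases Finset.mem_union.mp hx with hx | hx
        · exact hM.1.1 hx
        · rw [Finset.mem_singleton] at hx; subst hx; exact hO.1 huO
      · intro e he e' he'
        rcases Finset.mem_union.mp he with h1 | h1 <;>
          rcases Finset.mem_union.mp he' with h2 | h2
        · exact pairOK_of_cm hM.1 h1 h2
        · rw [Finset.mem_singleton] at h2; subst h2
          by_cases hem : e = m
          · subst hem; exact pairOK_of_cm hO hmO huO
          · exact pairOK_of_not_overlap (fun hov => hOnly e' huN e h1 hem (overlap_symm' hov))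
        · rw [Finset.mem_singleton] at h1; subst h1
          by_cases hem : e' = m
          · subst hem; exact pairOK_of_cm hO huO hmO
          · exact pairOK_of_not_overlap (hOnly e huN e' h2 hem)
        · rw [Finset.mem_singleton] at h1 h2; subst h1; subst h2
          exact pairOK_of_cm hO huO huO
  by_cases haM : a ∈ M
  · have ham : a = m := hMem a haM haN
    subst ham
    have hbM : b ∉ M := fun hbM' => hab (hMem b hbM' hbN).symm
    exact single_imp b hbO hbM hbN haO
  by_cases hbM : b ∈ M
  · have hbm : b = m := hMem b hbM hbN
    subst hbm
    exact single_imp a haO haM haN hbO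
  -- both outside M : swap {m} for {a, b}
  apply hM.2
  refine ⟨{m}, {a, b}, Finset.singleton_subset_iff.mpr hm, ?_, ?_, ?_, ?_⟩
  · intro x hx
    rcases Finset.mem_insert.mp hx with rfl | hx
    · exact Finset.mem_sdiff.mpr ⟨hO.1 haO, haM⟩
    · rw [Finset.mem_singleton] at hx; subst hx
      exact Finset.mem_sdiff.mpr ⟨hO.1 hbO, hbM⟩
  · rw [Finset.card_singleton, Finset.card_pair hab]; omega
  · rw [Finset.card_pair hab]
  · have hmemAB : ∀ x ∈ ({a, b} : Finset (Fin n × Fin n)),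
        x ∈ O ∧ M.filter (fun y => Overlap x y) = {m} := by
      intro x hx
      rcases Finset.mem_insert.mp hx with rfl | hx
      · exact ⟨haO, haN⟩
      · rw [Finset.mem_singleton] at hx; subst hx; exact ⟨hbO, hbN⟩
    apply cm_build
    · intro x hx
      rcases Finset.mem_union.mp hx with hx | hx
      · exact hM.1.1 (Finset.mem_sdiff.mp hx).1
      · exact hO.1 (hmemAB x hx).1
    · intro e he e' he'
      rcases Finset.mem_union.mp he with h1 | h1 <;>
        rcases Finset.mem_union.mp he' with h2 | h2
      · exact pairOK_of_cm hM.1 (Finset.mem_sdiff.mp h1).1 (Finset.mem_sdiff.mp h2).1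
      · obtain ⟨heM, hem⟩ := Finset.mem_sdiff.mp h1
        rw [Finset.mem_singleton] at hem
        exact pairOK_of_not_overlap
          (fun hov => hOnly e' (hmemAB e' h2).2 e heM hem (overlap_symm' hov))
      · obtain ⟨heM, hem⟩ := Finset.mem_sdiff.mp h2
        rw [Finset.mem_singleton] at hem
        exact pairOK_of_not_overlap (hOnly e (hmemAB e h1).2 e' heM hem)
      · exact pairOK_of_cm hO (hmemAB e h1).1 (hmemAB e' h2).1

end LocalSearchMain
/-- if `E` contains no run of 3 consecutive edges and `M` is a
2-locally-optimal consecutive matching in `E`, then `5|M| ≥ 2|O|` for every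
consecutive matching `O` in `E`. -/
theorem local_search_2_5_approx {n : ℕ} (hn : 1 ≤ n)
    (E : Finset (Fin n × Fin n)) (hE : NoRun E 3)
    (M : Finset (Fin n × Fin n)) (hM : LocallyOptimal E M 2)
    (O : Finset (Fin n × Fin n)) (hO : ConsecMatching E O) :
    5 * M.card ≥ 2 * O.card := by
  set f : (Fin n × Fin n) → (Fin n × Fin n) → ℕ := fun o m =>
    (if Overlap o m then 1 else 0) +
      (if M.filter (fun x => Overlap o x) = {m} then 1 else 0) with hf
  have h1 : ∀ o ∈ O, 2 ≤ ∑ m ∈ M, f o m := by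
    intro o ho
    have hne := exists_overlap hM hO ho
    rcases Nat.lt_or_ge 1 (M.filter (fun x => Overlap o x)).card with hlt | hle
    · obtain ⟨m1, hm1, m2, hm2, h12⟩ := Finset.one_lt_card.mp hlt
      have hsub2 : ({m1, m2} : Finset (Fin n × Fin n)) ⊆ M := by
        intro x hx
        rcases Finset.mem_insert.mp hx with rfl | hx
        · exact (Finset.mem_filter.mp hm1).1
        · rw [Finset.mem_singleton] at hx; subst hx
          exact (Finset.mem_filter.mp hm2).1
      have hb1 : 1 ≤ f o m1 := by
        rw [hf]; simp only [(Finset.mem_filter.mp hm1).2, if_true]; omega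
      have hb2 : 1 ≤ f o m2 := by
        rw [hf]; simp only [(Finset.mem_filter.mp hm2).2, if_true]; omega
      calc 2 ≤ f o m1 + f o m2 := by omega
        _ = ∑ m ∈ ({m1, m2} : Finset (Fin n × Fin n)), f o m := (Finset.sum_pair h12).symm
        _ ≤ ∑ m ∈ M, f o m := Finset.sum_le_sum_of_subset hsub2
    · have hcard : (M.filter (fun x => Overlap o x)).card = 1 :=
        le_antisymm hle (Finset.card_pos.mpr hne)
      obtain ⟨m0, hm0⟩ := Finset.card_eq_one.mp hcard
      have hm0f : m0 ∈ M.filter (fun x => Overlap o x) := by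
        rw [hm0]; exact Finset.mem_singleton_self m0
      have hm0M : m0 ∈ M := (Finset.mem_filter.mp hm0f).1
      have hov : Overlap o m0 := (Finset.mem_filter.mp hm0f).2
      have hval : f o m0 = 2 := by rw [hf]; simp only [hov, if_true, hm0, if_pos rfl]
      calc 2 = f o m0 := hval.symm
        _ ≤ ∑ m ∈ M, f o m := Finset.single_le_sum (fun i _ => Nat.zero_le _) hm0M
  have h2 : ∀ m ∈ M, ∑ o ∈ O, f o m ≤ 5 := by
    intro m hm
    have hsplit : ∑ o ∈ O, f o m =
        (O.filter (fun o => Overlap o m)).card +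
        (O.filter (fun o => M.filter (fun x => Overlap o x) = {m})).card := by
      rw [hf, Finset.sum_add_distrib, Finset.card_filter, Finset.card_filter]
    rw [hsplit]
    have hA := overlapping_le_four hE hO m
    have hB := private_le_one hM hO hm
    omega
  calc 2 * O.card = ∑ _o ∈ O, 2 := by rw [Finset.sum_const, smul_eq_mul, mul_comm]
    _ ≤ ∑ o ∈ O, ∑ m ∈ M, f o m := Finset.sum_le_sum h1
    _ = ∑ m ∈ M, ∑ o ∈ O, f o m := Finset.sum_comm
    _ ≤ ∑ _m ∈ M, 5 := Finset.sum_le_sum h2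
    _ = 5 * M.card := by rw [Finset.sum_const, smul_eq_mul, mul_comm]
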